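/- arXiv:1404.7634 — 2 statements merged into one kernel-verified Lean document; each statement's English description precedes it below -/
import Mathlib

section
/- Define, for each vertex v, the sets P_0(v) = {v} and, for 1 ≤ i ≤ k, P_i(v) = P_{i−1}(v) ∪ ⋃_{(u,v) ∈ E_i} P_{i−1}(u). Then for every i with 0 ≤ i ≤ k and every vertex v, P_i(v) = {v} ∪ {u ∈ V : there is a strict journey from u to v using only time indices ≤ i}. In particular, P_k(v) = {v} ∪ {u : there is a strict journey from u to v}, so this iteration computes exactly the strict transitive closure of the evolving graph. -/
/-!
An evolving graph on a finite vertex set `V` is given by edge sets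
`E i ⊆ V × V` for time steps `i ∈ {1, ..., k}`.  A strict journey from `u`
to `v` using only time indices `≤ i` is a directed walk with at least one
edge, whose edges carry strictly increasing time indices in `{1, ..., i}`.
We encode a walk with `p + 1 ≥ 1` edges by its vertex sequence
`w : Fin (p + 2) → V`.
-/

variable {V : Type*}

/-- There is a strict journey from `u` to `v` using only time indices `≤ i`. -/
def StrictJourneyLE (E : ℕ → Finset (V × V)) (i : ℕ) (u v : V) : Prop :=
  ∃ (p : ℕ) (w : Fin (p + 2) → V) (t : Fin (p + 1) → ℕ),
    StrictMono t ∧ (∀ j, 1 ≤ t j ∧ t j ≤ i) ∧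
    w 0 = u ∧ w (Fin.last (p + 1)) = v ∧
    ∀ j : Fin (p + 1), (w j.castSucc, w j.succ) ∈ E (t j)

/-- The predecessor sets of the algorithm: `P 0 v = {v}` and
`P (i+1) v = P i v ∪ ⋃_{(u,v) ∈ E (i+1)} P i u`. -/
def P [DecidableEq V] (E : ℕ → Finset (V × V)) : ℕ → V → Finset V
  | 0, v => {v}
  | i + 1, v =>
      P E i v ∪ ((E (i + 1)).filter (fun e => e.2 = v)).biUnion (fun e => P E i e.1)

lemma sj_zero (E : ℕ → Finset (V × V)) (u v : V) : ¬ StrictJourneyLE E 0 u v := by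
  rintro ⟨p, w, t, -, hb, -⟩
  have := hb 0
  omega

lemma sj_mono {E : ℕ → Finset (V × V)} {i j : ℕ} (h : i ≤ j) {u v : V}
    (hj : StrictJourneyLE E i u v) : StrictJourneyLE E j u v := by
  obtain ⟨p, w, t, h1, h2, h3⟩ := hj
  exact ⟨p, w, t, h1, fun x => ⟨(h2 x).1, le_trans (h2 x).2 h⟩, h3⟩

lemma sj_single {E : ℕ → Finset (V × V)} {i : ℕ} {u v : V}
    (h : (u, v) ∈ E (i + 1)) : StrictJourneyLE E (i + 1) u v := by
  refine ⟨0, ![u, v], fun _ => i + 1, ?_, fun j => ⟨Nat.succ_le_succ (Nat.zero_le i), le_refl _⟩, rfl, rfl, ?_⟩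
  · intro a b hab
    fin_cases a; fin_cases b; simp at hab
  · intro j
    fin_cases j
    simpa using h

lemma sj_extend {E : ℕ → Finset (V × V)} {i : ℕ} {u u' v : V}
    (hj : StrictJourneyLE E i u u') (h : (u', v) ∈ E (i + 1)) :
    StrictJourneyLE E (i + 1) u v := by
  obtain ⟨p, w, t, hmono, hb, h0, hl, he⟩ := hj
  refine ⟨p + 1, Fin.snoc w v, Fin.snoc t (i + 1), ?_, ?_, ?_, ?_, ?_⟩
  · intro a b hab
    rcases Fin.eq_castSucc_or_eq_last b with ⟨b', rfl⟩ | rfl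
    · rcases Fin.eq_castSucc_or_eq_last a with ⟨a', rfl⟩ | rfl
      · simp only [Fin.snoc_castSucc]
        exact hmono (by exact_mod_cast hab)
      · exact absurd hab (by simp [Fin.lt_iff_val_lt_val])
    · rcases Fin.eq_castSucc_or_eq_last a with ⟨a', rfl⟩ | rfl
      · simp only [Fin.snoc_castSucc, Fin.snoc_last]
        have := (hb a').2; omega
      · exact absurd hab (lt_irrefl _)
  · intro j
    rcases Fin.eq_castSucc_or_eq_last j with ⟨j', rfl⟩ | rfl
    · simp only [Fin.snoc_castSucc]
      have := hb j'; omega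
    · simp
  · have h00 : (0 : Fin (p + 3)) = (0 : Fin (p + 2)).castSucc := rfl
    rw [h00, Fin.snoc_castSucc]; exact h0
  · simp
  · intro j
    rcases Fin.eq_castSucc_or_eq_last j with ⟨j', rfl⟩ | rfl
    · rw [Fin.snoc_castSucc, Fin.snoc_castSucc, Fin.succ_castSucc, Fin.snoc_castSucc]
      exact he j'
    · rw [Fin.snoc_last, Fin.succ_last, Fin.snoc_last, Fin.snoc_castSucc, hl]
      exact h

lemma sj_decompose {E : ℕ → Finset (V × V)} {i : ℕ} {u v : V}
    (hj : StrictJourneyLE E (i + 1) u v) :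
    StrictJourneyLE E i u v ∨
      ∃ u', (u', v) ∈ E (i + 1) ∧ (u' = u ∨ StrictJourneyLE E i u u') := by
  obtain ⟨p, w, t, hmono, hb, h0, hl, he⟩ := hj
  by_cases hle : t (Fin.last p) ≤ i
  · left
    refine ⟨p, w, t, hmono, fun j => ⟨(hb j).1, ?_⟩, h0, hl, he⟩
    exact le_trans (hmono.monotone (Fin.le_last j)) hle
  · right
    have hlast : t (Fin.last p) = i + 1 := by have := (hb (Fin.last p)).2; omega
    have hedge := he (Fin.last p)
    rw [Fin.succ_last, hl, hlast] at hedge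
    refine ⟨w ((Fin.last p).castSucc), hedge, ?_⟩
    match p, w, t, hmono, hb, h0, hl, he, hlast with
    | 0, w, t, hmono, hb, h0, hl, he, hlast =>
      left
      exact h0
    | q + 1, w, t, hmono, hb, h0, hl, he, hlast =>
      right
      refine ⟨q, w ∘ Fin.castSucc, t ∘ Fin.castSucc,
        hmono.comp (fun a b hab => Fin.castSucc_lt_castSucc_iff.mpr hab),
        ?_, ?_, ?_, ?_⟩
      · intro j
        refine ⟨(hb _).1, ?_⟩
        show t j.castSucc ≤ i
        have : t j.castSucc < t (Fin.last (q + 1)) := hmono (Fin.castSucc_lt_last j)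
        omega
      · exact h0
      · exact rfl
      · intro j
        show (w ((j.castSucc).castSucc), w ((j.succ).castSucc)) ∈ E (t j.castSucc)
        rw [← Fin.succ_castSucc]
        exact he j.castSucc

/-- For every `0 ≤ i ≤ k` and every vertex `v`,
`P i v = {v} ∪ {u : there is a strict journey from u to v using only time
indices ≤ i}`; in particular for `i = k` this iteration computes exactly the
strict transitive closure of the evolving graph. -/
theorem P_eq_strict_predecessors [DecidableEq V]
    (k : ℕ) (E : ℕ → Finset (V × V)) :
    ∀ i ≤ k, ∀ v : V,
      (↑(P E i v) : Set V) = {v} ∪ {u : V | StrictJourneyLE E i u v} := by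
  have main : ∀ i, ∀ v : V,
      (↑(P E i v) : Set V) = {v} ∪ {u : V | StrictJourneyLE E i u v} := by
    intro i
    induction i with
    | zero =>
      intro v
      ext x
      simp [P, sj_zero]
    | succ i ih =>
      intro v
      ext x
      simp only [P, Finset.coe_union, Set.mem_union, Finset.mem_coe,
        Finset.mem_biUnion, Finset.mem_filter, Set.mem_singleton_iff,
        Set.mem_setOf_eq]
      have hx : ∀ y : V, x ∈ P E i y ↔ x = y ∨ StrictJourneyLE E i x y := by
        intro y
        have := ih y
        rw [Set.ext_iff] at this
        simpa using this x
      constructor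
      · rintro (h | ⟨⟨a, b⟩, ⟨hab, rfl⟩, hxa⟩)
        · rcases (hx _).mp h with rfl | hj
          · exact Or.inl rfl
          · exact Or.inr (sj_mono (Nat.le_succ i) hj)
        · rcases (hx _).mp hxa with rfl | hj
          · exact Or.inr (sj_single hab)
          · exact Or.inr (sj_extend hj hab)
      · rintro (rfl | hj)
        · exact Or.inl ((hx _).mpr (Or.inl rfl))
        · rcases sj_decompose hj with h | ⟨u', hu', h⟩
          · exact Or.inl ((hx _).mpr (Or.inr h))
          · refine Or.inr ⟨(u', _), ⟨hu', rfl⟩, (hx _).mpr ?_⟩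
            rcases h with rfl | h
            · exact Or.inl rfl
            · exact Or.inr h
  exact fun i _ => main i
end

section
/- Define, for each vertex v, the sets P_0(v) = {v} and, for 1 ≤ i ≤ k, P_i(v) = P_{i−1}(v) ∪ ⋃_{(u,v) ∈ E_i} P_{i−1}(u). If for some step t ≤ k one has |P_t(v)| = |V| for every vertex v, then for every pair of distinct vertices u, v there is a strict journey from u to v using only time indices ≤ t; in particular, the evolving graph is temporally connected for strict journeys and the algorithm may terminate early returning the complete graph. -/
/-!
An evolving graph on a finite vertex set `V` is given by edge sets
`E i ⊆ V × V` for time steps `i ∈ {1, ..., k}`.  A strict journey from `u`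
to `v` using only time indices `≤ t` is a directed walk with at least one
edge, whose edges carry strictly increasing time indices in `{1, ..., t}`.
We encode a walk with `p + 1 ≥ 1` edges by its vertex sequence
`w : Fin (p + 2) → V`.
-/

variable {V : Type*}

lemma StrictJourneyLE.mono {E : ℕ → Finset (V × V)} {i j : ℕ} (hij : i ≤ j)
    {u v : V} (h : StrictJourneyLE E i u v) : StrictJourneyLE E j u v := by
  obtain ⟨p, w, t, h1, h2, h3⟩ := h
  exact ⟨p, w, t, h1, fun j' => ⟨(h2 j').1, le_trans (h2 j').2 hij⟩, h3⟩

lemma StrictJourneyLE.single {E : ℕ → Finset (V × V)} {i : ℕ} {u v : V}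
    (hi : 1 ≤ i) (he : (u, v) ∈ E i) : StrictJourneyLE E i u v := by
  refine ⟨0, ![u, v], fun _ => i, ?_, fun _ => ⟨hi, le_refl i⟩, rfl, rfl, ?_⟩
  · intro a b hab
    exact absurd (Fin.ext (by omega)) (ne_of_lt hab)
  · intro j
    have : j = 0 := Fin.ext (by omega)
    subst this
    simpa using he

lemma StrictJourneyLE.extend {E : ℕ → Finset (V × V)} {i : ℕ} {u x v : V}
    (h : StrictJourneyLE E i u x) (he : (x, v) ∈ E (i + 1)) :
    StrictJourneyLE E (i + 1) u v := by
  obtain ⟨p, w, t, hmono, hbd, hu, hx, hedge⟩ := h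
  refine ⟨p + 1, Fin.snoc w v, Fin.snoc t (i + 1), ?_, ?_, ?_, ?_, ?_⟩
  · intro a b hab
    rcases Fin.eq_castSucc_or_eq_last b with ⟨b', rfl⟩ | rfl
    · have ha : a ≠ Fin.last _ := by
        intro h'
        subst h'
        exact absurd (lt_of_le_of_lt (Fin.le_last b'.castSucc) hab) (lt_irrefl _)
      obtain ⟨a', rfl⟩ := Fin.exists_castSucc_eq.2 ha
      simp only [Fin.snoc_castSucc]
      exact hmono (by exact_mod_cast hab)
    · have ha : a ≠ Fin.last _ := ne_of_lt hab
      obtain ⟨a', rfl⟩ := Fin.exists_castSucc_eq.2 ha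
      simp only [Fin.snoc_castSucc, Fin.snoc_last]
      exact lt_of_le_of_lt (hbd a').2 (Nat.lt_succ_self i)
  · intro j
    rcases Fin.eq_castSucc_or_eq_last j with ⟨j', rfl⟩ | rfl
    · simp only [Fin.snoc_castSucc]
      exact ⟨(hbd j').1, le_trans (hbd j').2 (Nat.le_succ i)⟩
    · simp only [Fin.snoc_last]
      omega
  · have : (0 : Fin (p + 3)) = Fin.castSucc 0 := rfl
    rw [this, Fin.snoc_castSucc]
    exact hu
  · simp [Fin.snoc_last]
  · intro j
    rcases Fin.eq_castSucc_or_eq_last j with ⟨j', rfl⟩ | rfl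
    · rw [Fin.succ_castSucc]
      simp only [Fin.snoc_castSucc]
      exact hedge j'
    · rw [Fin.succ_last]
      simp only [Fin.snoc_last]
      have : (Fin.last (p + 1)).castSucc = Fin.castSucc (Fin.last (p + 1)) := rfl
      rw [this, Fin.snoc_castSucc, hx]
      exact he

lemma mem_P_journey [DecidableEq V] (E : ℕ → Finset (V × V)) :
    ∀ (i : ℕ) (v u : V), u ∈ P E i v → u = v ∨ StrictJourneyLE E i u v := by
  intro i
  induction i with
  | zero =>
    intro v u hu
    left
    simpa [P] using hu
  | succ i ih =>
    intro v u hu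
    simp only [P, Finset.mem_union, Finset.mem_biUnion, Finset.mem_filter] at hu
    rcases hu with hu | ⟨e, ⟨heE, hev⟩, hu⟩
    · rcases ih v u hu with h | h
      · exact Or.inl h
      · exact Or.inr (h.mono (Nat.le_succ i))
    · subst hev
      have he : (e.1, e.2) ∈ E (i + 1) := by rwa [Prod.mk.eta]
      rcases ih e.1 u hu with rfl | h
      · exact Or.inr (StrictJourneyLE.single (Nat.succ_le_succ (Nat.zero_le i)) he)
      · exact Or.inr (h.extend he)

/-- If at some step `t ≤ k` every vertex has `|P t v| = |V|`, then every pair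
of distinct vertices is connected by a strict journey using only time indices
`≤ t`; in particular the evolving graph is temporally connected for strict
journeys (journeys with time indices `≤ k`), so the algorithm may terminate
early returning the complete graph. -/
theorem early_termination [Fintype V] [DecidableEq V]
    (k : ℕ) (E : ℕ → Finset (V × V)) (t : ℕ) (htk : t ≤ k)
    (hfull : ∀ v : V, (P E t v).card = Fintype.card V) :
    (∀ u v : V, u ≠ v → StrictJourneyLE E t u v) ∧
    (∀ u v : V, u ≠ v → StrictJourneyLE E k u v) := by
  have key : ∀ u v : V, u ≠ v → StrictJourneyLE E t u v := by
    intro u v huv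
    have hmem : u ∈ P E t v := by
      rw [Finset.eq_univ_of_card _ (hfull v)]
      exact Finset.mem_univ u
    rcases mem_P_journey E t v u hmem with rfl | h
    · exact absurd rfl huv
    · exact h
  exact ⟨key, fun u v huv => (key u v huv).mono htk⟩
end
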